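/- For every finite, simple, connected, undirected graph G and every ε > 0 there exists a memoryless randomized robber strategy π_R^ε that is ε-optimal simultaneously for every initial position with finite value: for every (x,y) ∈ V² with v̂_{(x,y)} < ∞, inf_{π_C} v_{(x,y)}(π_C, π_R^ε) ≥ v̂_{(x,y)} − ε, where v̂_{(x,y)} is the value of the concurrent game started at (x,y). -/

import Mathlib

open Finset Filter

noncomputable section

variable {V : Type*} [Fintype V] [DecidableEq V]

/-- The closed neighborhood `N[u]` of a vertex `u`: `u` together with its neighbors. -/
def nbhd (G : SimpleGraph V) [DecidableRel G.Adj] (u : V) : Finset V :=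
  insert u (G.neighborFinset u)

lemma nbhd_nonempty (G : SimpleGraph V) [DecidableRel G.Adj] (u : V) :
    (nbhd G u).Nonempty :=
  ⟨u, Finset.mem_insert_self u _⟩

/-! ### The single-cop concurrent game, with the expected-capture-time payoff -/

/-- A randomized strategy in the single-cop concurrent game: to each finite history of
positions (cop location, robber location) it assigns a distribution over next moves. -/
abbrev Strat (V : Type*) := List (V × V) → PMF V

/-- A strategy is memoryless if the distribution it assigns depends only on the
current (most recent) position. -/
def Memoryless (π : Strat V) : Prop :=
  ∀ h₁ h₂ : List (V × V), h₁.getLast? = h₂.getLast? → π h₁ = π h₂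

/-- The single-cop CCCR transition function: simultaneous moves within closed
neighborhoods (illegal moves ignored), capture positions are absorbing, and a swap of
adjacent vertices is an \"en passant\" capture. -/
def step1 (G : SimpleGraph V) [DecidableRel G.Adj] (p : V × V) (u w : V) : V × V :=
  if p.1 = p.2 then p
  else
    let u' := if u ∈ nbhd G p.1 then u else p.1
    let w' := if w ∈ nbhd G p.2 then w else p.2
    if u' = p.2 ∧ w' = p.1 then (u', u') else (u', w')

/-- The distribution over histories of the first `t+1` positions, induced by the
strategies `πC, πR` and the initial position `init`. -/
def play1 (G : SimpleGraph V) [DecidableRel G.Adj]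
    (πC πR : Strat V) (init : V × V) : ℕ → PMF (List (V × V))
  | 0 => PMF.pure [init]
  | (t+1) => (play1 G πC πR init t).bind fun h =>
      (πC h).bind fun u => (πR h).bind fun w =>
        PMF.pure (h ++ [step1 G (h.getLast?.getD init) u w])

/-- The probability that cop and robber occupy different vertices at time `t`
(capture is absorbing, so this is the probability that the robber is still free). -/
def freeProb1 (G : SimpleGraph V) [DecidableRel G.Adj]
    (πC πR : Strat V) (init : V × V) (t : ℕ) : ENNReal :=
  (play1 G πC πR init t).toOuterMeasure
    {h | (h.getLast?.getD init).1 ≠ (h.getLast?.getD init).2}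

/-- The payoff: the expected number of rounds `t ≥ 0` at which cop and robber occupy
different vertices, i.e. the expected capture time. -/
def payoff (G : SimpleGraph V) [DecidableRel G.Adj]
    (πC πR : Strat V) (init : V × V) : ENNReal :=
  ∑' t : ℕ, freeProb1 G πC πR init t

/-- The (upper) value of the game started at `init`; the cop minimizes and the robber
maximizes the expected capture time. -/
def gameValue (G : SimpleGraph V) [DecidableRel G.Adj] (init : V × V) : ENNReal :=
  ⨅ πC : Strat V, ⨆ πR : Strat V, payoff G πC πR init


section Minimax

variable {ι κ : Type*} [Fintype ι] [Fintype κ]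

theorem exists_matrix_game_value [Nonempty ι] [Nonempty κ] (A : ι → κ → ℝ) :
    ∃ c : ℝ, ∃ ρ ∈ stdSimplex ℝ κ, ∃ α ∈ stdSimplex ℝ ι,
      (∀ u, c ≤ ∑ w, ρ w * A u w) ∧ (∀ w, ∑ u, α u * A u w ≤ c) := by
  classical
  set φ : (κ → ℝ) → ℝ :=
    fun ρ => (univ : Finset ι).inf' univ_nonempty fun u => ∑ w, ρ w * A u w with hφdef
  have hφc : Continuous φ := by
    have : φ = fun ρ => ((univ : Finset ι).inf' univ_nonempty
        (fun u => ContinuousMap.mk (fun ρ' : κ → ℝ => ∑ w, ρ' w * A u w)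
          (by continuity))) ρ := by
      funext ρ
      rw [ContinuousMap.inf'_apply]
      rfl
    rw [this]
    exact ContinuousMap.continuous _
  obtain ⟨w₀⟩ := ‹Nonempty κ›
  have hSne : (stdSimplex ℝ κ).Nonempty := ⟨_, ite_eq_mem_stdSimplex ℝ w₀⟩
  obtain ⟨ρ, hρS, hρmax⟩ :=
    (isCompact_stdSimplex ℝ κ).exists_isMaxOn hSne hφc.continuousOn
  set s : ℝ := φ ρ with hsdef
  refine ⟨s, ρ, hρS, ?_⟩
  -- the separation argument producing the cop's optimal mixed strategy
  set D : Set (ι → ℝ) := (fun ρ' : κ → ℝ => fun u => ∑ w, ρ' w * A u w) '' stdSimplex ℝ κ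
    with hDdef
  set Q : Set (ι → ℝ) := {y | ∀ u, s < y u} with hQdef
  have hQo : IsOpen Q := by
    have : Q = ⋂ u : ι, {y : ι → ℝ | s < y u} := by
      ext y; simp [hQdef, Set.mem_iInter]
    rw [this]
    exact isOpen_iInter_of_finite fun u => isOpen_lt continuous_const (continuous_apply u)
  have hQc : Convex ℝ Q := by
    intro y hy z hz a b ha hb hab
    intro u
    have hyu : s < y u := hy u
    have hzu : s < z u := hz u
    simp only [Pi.add_apply, Pi.smul_apply, smul_eq_mul]
    rcases ha.eq_or_lt with h | h
    · subst h; simp only [zero_mul, zero_add] at *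
      have : b = 1 := by linarith
      rw [this]; simpa using hzu
    · calc s = a * s + b * s := by rw [← add_mul, hab, one_mul]
      _ < a * y u + b * z u := by
          have h1 : a * s < a * y u := by exact mul_lt_mul_of_pos_left hyu h
          have h2 : b * s ≤ b * z u := mul_le_mul_of_nonneg_left hzu.le hb
          linarith
  have hDc : Convex ℝ D := by
    rintro y ⟨ρ₁, h₁, rfl⟩ z ⟨ρ₂, h₂, rfl⟩ a b ha hb hab
    refine ⟨a • ρ₁ + b • ρ₂, convex_stdSimplex ℝ κ h₁ h₂ ha hb hab, ?_⟩
    funext u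
    simp only [Pi.add_apply, Pi.smul_apply, smul_eq_mul, Finset.mul_sum,
      ← Finset.sum_add_distrib]
    refine Finset.sum_congr rfl fun w _ => by ring
  have hdisj : Disjoint Q D := by
    rw [Set.disjoint_left]
    rintro y hyQ ⟨ρ', hρ'S, rfl⟩
    obtain ⟨u₀, -, hu₀⟩ := Finset.exists_mem_eq_inf' (univ_nonempty (α := ι))
      (fun u => ∑ w, ρ' w * A u w)
    have h1 : φ ρ' ≤ s := hρmax hρ'S
    have h2 : s < ∑ w, ρ' w * A u₀ w := hyQ u₀
    rw [hφdef] at h1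
    simp only at h1
    rw [hu₀] at h1
    linarith
  obtain ⟨f, c, hf1, hf2⟩ := geometric_hahn_banach_open hQc hQo hDc hdisj
  set β : ι → ℝ := fun u => -(f fun j => if u = j then (1:ℝ) else 0) with hβdef
  have hconstQ : ∀ δ : ℝ, 0 < δ → ((fun _ => s + δ) : ι → ℝ) ∈ Q := by
    intro δ hδ u; simpa using by linarith
  have hβ0 : ∀ u, 0 ≤ β u := by
    intro u
    by_contra h
    push_neg at h
    have hγ : 0 < f fun j => if u = j then (1:ℝ) else 0 := by
      rw [hβdef] at h; simp only at h; linarith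
    set γ := f fun j => if u = j then (1:ℝ) else 0
    set c₀ := f fun _ => s + 1
    set t₀ : ℝ := max 0 ((c - c₀) / γ)
    have hyQ : ((fun _ => s + 1) + t₀ • fun j => if u = j then (1:ℝ) else 0) ∈ Q := by
      intro v
      simp only [Pi.add_apply, Pi.smul_apply, smul_eq_mul]
      have h0 : 0 ≤ t₀ * (if u = v then (1:ℝ) else 0) := by
        have := le_max_left 0 ((c - c₀) / γ)
        split <;> nlinarith
      linarith
    have hlt := hf1 _ hyQ
    rw [map_add, map_smul, smul_eq_mul] at hlt
    have htγ : t₀ * γ < c - c₀ := by linarith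
    have : (c - c₀) / γ ≤ t₀ := le_max_right _ _
    have : c - c₀ ≤ t₀ * γ := by
      rw [div_le_iff₀ hγ] at this; linarith
    linarith
  have hfy : ∀ y : ι → ℝ, f y = -∑ u, β u * y u := by
    intro y
    conv_lhs => rw [pi_eq_sum_univ y]
    rw [map_sum, ← Finset.sum_neg_distrib]
    refine Finset.sum_congr rfl fun u _ => ?_
    rw [map_smul, smul_eq_mul]
    simp only [hβdef]
    ring
  have hD : ∀ d ∈ D, ∑ u, β u * d u ≤ -c := by
    intro d hd
    have := hf2 d hd
    rw [hfy d] at this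
    linarith
  have hSβpos : 0 < ∑ u, β u := by
    rcases (Finset.sum_nonneg fun u _ => hβ0 u).eq_or_lt with h | h
    · exfalso
      have hz : ∀ u, β u = 0 := by
        intro u
        have := (Finset.sum_eq_zero_iff_of_nonneg fun u _ => hβ0 u).mp h.symm
        exact this u (mem_univ u)
      have hf0 : ∀ y : ι → ℝ, f y = 0 := by
        intro y; rw [hfy]; simp [hz]
      have h1 := hf1 _ (hconstQ 1 one_pos)
      rw [hf0] at h1
      have h2 := hf2 _ ⟨ρ, hρS, rfl⟩
      rw [hf0] at h2
      linarith
    · exact h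
  have hcs : -c ≤ s * ∑ u, β u := by
    by_contra h
    push_neg at h
    set δ := (-c - s * ∑ u, β u) / (2 * ∑ u, β u) with hδdef
    have hδpos : 0 < δ := by
      apply div_pos <;> nlinarith
    have := hf1 _ (hconstQ δ hδpos)
    rw [hfy] at this
    have hsum : ∑ u, β u * (s + δ) = (s + δ) * ∑ u, β u := by
      rw [Finset.mul_sum]; exact Finset.sum_congr rfl fun u _ => by ring
    rw [hsum] at this
    have hδval : δ * (∑ u, β u) = (-c - s * ∑ u, β u) / 2 := by
      rw [hδdef]; field_simp
    nlinarith
  set α : ι → ℝ := fun u => (∑ u', β u')⁻¹ * β u with hαdef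
  have hαS : α ∈ stdSimplex ℝ ι := by
    constructor
    · intro u
      exact mul_nonneg (inv_nonneg.mpr hSβpos.le) (hβ0 u)
    · rw [← Finset.mul_sum]
      exact inv_mul_cancel₀ hSβpos.ne'
  refine ⟨α, hαS, ?_, ?_⟩
  · intro u
    rw [hsdef, hφdef]
    exact Finset.inf'_le _ (mem_univ u)
  · intro w
    have hdD : (fun u => A u w) ∈ D := by
      refine ⟨fun w' => if w = w' then (1:ℝ) else 0, ite_eq_mem_stdSimplex ℝ w, ?_⟩
      funext u
      simp [Finset.sum_ite_eq]
    have h1 : ∑ u, β u * A u w ≤ -c := hD _ hdD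
    have h2 : ∑ u, α u * A u w = (∑ u', β u')⁻¹ * ∑ u, β u * A u w := by
      rw [Finset.mul_sum]
      exact Finset.sum_congr rfl fun u _ => by rw [hαdef]; ring
    rw [h2]
    calc (∑ u', β u')⁻¹ * ∑ u, β u * A u w ≤ (∑ u', β u')⁻¹ * (s * ∑ u', β u') := by
          apply mul_le_mul_of_nonneg_left _ (inv_nonneg.mpr hSβpos.le)
          linarith
      _ = s := by field_simp
end Minimax
section GVDef

open Finset

variable {ι κ : Type*} [Fintype ι] [Fintype κ] [Nonempty ι] [Nonempty κ]

set_option linter.unusedSectionVars false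

/-- convex-combination lower bound -/
lemma stdSimplex_wsum_le {σ : ι → ℝ} (hσ : σ ∈ stdSimplex ℝ ι) {x : ι → ℝ} {c : ℝ}
    (h : ∀ i, x i ≤ c) : ∑ i, σ i * x i ≤ c := by
  calc ∑ i, σ i * x i ≤ ∑ i, σ i * c := by
        refine Finset.sum_le_sum fun i _ => mul_le_mul_of_nonneg_left (h i) (hσ.1 i)
    _ = c := by rw [← Finset.sum_mul, hσ.2, one_mul]

lemma le_stdSimplex_wsum {σ : ι → ℝ} (hσ : σ ∈ stdSimplex ℝ ι) {x : ι → ℝ} {c : ℝ}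
    (h : ∀ i, c ≤ x i) : c ≤ ∑ i, σ i * x i := by
  calc c = ∑ i, σ i * c := by rw [← Finset.sum_mul, hσ.2, one_mul]
    _ ≤ ∑ i, σ i * x i := by
        refine Finset.sum_le_sum fun i _ => mul_le_mul_of_nonneg_left (h i) (hσ.1 i)

noncomputable def gv (A : ι → κ → ℝ) : ℝ := (exists_matrix_game_value A).choose

noncomputable def gvRho (A : ι → κ → ℝ) : κ → ℝ :=
  (exists_matrix_game_value A).choose_spec.choose

noncomputable def gvAlpha (A : ι → κ → ℝ) : ι → ℝ :=
  (exists_matrix_game_value A).choose_spec.choose_spec.2.choose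

lemma gvRho_mem (A : ι → κ → ℝ) : gvRho A ∈ stdSimplex ℝ κ :=
  (exists_matrix_game_value A).choose_spec.choose_spec.1

lemma gvAlpha_mem (A : ι → κ → ℝ) : gvAlpha A ∈ stdSimplex ℝ ι :=
  (exists_matrix_game_value A).choose_spec.choose_spec.2.choose_spec.1

lemma gv_le_rho (A : ι → κ → ℝ) : ∀ u, gv A ≤ ∑ w, gvRho A w * A u w :=
  (exists_matrix_game_value A).choose_spec.choose_spec.2.choose_spec.2.1

lemma alpha_le_gv (A : ι → κ → ℝ) : ∀ w, ∑ u, gvAlpha A u * A u w ≤ gv A :=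
  (exists_matrix_game_value A).choose_spec.choose_spec.2.choose_spec.2.2

lemma gv_le_of_forall_le {A : ι → κ → ℝ} {c : ℝ} (h : ∀ u w, A u w ≤ c) : gv A ≤ c := by
  obtain ⟨u₀⟩ := ‹Nonempty ι›
  exact le_trans (gv_le_rho A u₀) (stdSimplex_wsum_le (gvRho_mem A) fun w => h u₀ w)

lemma le_gv_of_forall_le {A : ι → κ → ℝ} {c : ℝ} (h : ∀ u w, c ≤ A u w) : c ≤ gv A := by
  obtain ⟨w₀⟩ := ‹Nonempty κ›
  exact le_trans (le_stdSimplex_wsum (gvAlpha_mem A) fun u => h u w₀) (alpha_le_gv A w₀)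

lemma gv_mono {A B : ι → κ → ℝ} (h : ∀ u w, A u w ≤ B u w) : gv A ≤ gv B := by
  have h1 : gv A ≤ ∑ u, gvAlpha B u * (∑ w, gvRho A w * A u w) :=
    le_stdSimplex_wsum (gvAlpha_mem B) (gv_le_rho A)
  have h2 : ∑ u, gvAlpha B u * (∑ w, gvRho A w * A u w)
      = ∑ w, gvRho A w * (∑ u, gvAlpha B u * A u w) := by
    simp only [Finset.mul_sum]
    rw [Finset.sum_comm]
    exact Finset.sum_congr rfl fun w _ => Finset.sum_congr rfl fun u _ => by ring
  have h3 : ∑ w, gvRho A w * (∑ u, gvAlpha B u * A u w)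
      ≤ ∑ w, gvRho A w * (∑ u, gvAlpha B u * B u w) := by
    refine Finset.sum_le_sum fun w _ => mul_le_mul_of_nonneg_left ?_ ((gvRho_mem A).1 w)
    exact Finset.sum_le_sum fun u _ =>
      mul_le_mul_of_nonneg_left (h u w) ((gvAlpha_mem B).1 u)
  have h4 : ∑ w, gvRho A w * (∑ u, gvAlpha B u * B u w) ≤ gv B :=
    stdSimplex_wsum_le (gvRho_mem A) (alpha_le_gv B)
  linarith

end GVDef
section Iter

open Finset
open scoped ENNReal

variable {V : Type*} [Fintype V] [DecidableEq V] [Nonempty V]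
variable (G : SimpleGraph V) [DecidableRel G.Adj]

/-- One step of (robber-favoring) value iteration for the CCCR game. -/
noncomputable def PhiOp (f : V × V → ℝ) : V × V → ℝ :=
  fun p => if p.1 = p.2 then 0 else 1 + gv (fun u w => f (step1 G p u w))

/-- Value iteration from `0`. -/
noncomputable def iterVal : ℕ → (V × V → ℝ)
  | 0 => fun _ => 0
  | n + 1 => PhiOp G (iterVal n)

lemma iterVal_zero (p : V × V) : iterVal G 0 p = 0 := rfl

lemma iterVal_succ (n : ℕ) (p : V × V) :
    iterVal G (n + 1) p
      = if p.1 = p.2 then 0 else 1 + gv (fun u w => iterVal G n (step1 G p u w)) := rfl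

lemma iterVal_nonneg : ∀ n p, 0 ≤ iterVal G n p := by
  intro n
  induction n with
  | zero => intro p; simp [iterVal]
  | succ n ih =>
    intro p
    rw [iterVal_succ]
    split
    · exact le_refl 0
    · have : (0:ℝ) ≤ gv fun u w => iterVal G n (step1 G p u w) :=
        le_gv_of_forall_le fun u w => ih _
      linarith

lemma iterVal_diag (n : ℕ) (p : V × V) (hp : p.1 = p.2) : iterVal G n p = 0 := by
  cases n with
  | zero => rfl
  | succ n => rw [iterVal_succ, if_pos hp]

lemma iterVal_le : ∀ n p, iterVal G n p ≤ n := by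
  intro n
  induction n with
  | zero => intro p; simp [iterVal]
  | succ n ih =>
    intro p
    rw [iterVal_succ]
    split
    · positivity
    · push_cast
      have : gv (fun u w => iterVal G n (step1 G p u w)) ≤ n :=
        gv_le_of_forall_le fun u w => ih _
      linarith

lemma iterVal_succ_le_succ : ∀ n p, iterVal G n p ≤ iterVal G (n + 1) p := by
  intro n
  induction n with
  | zero => intro p; simpa [iterVal_zero] using iterVal_nonneg G 1 p
  | succ n ih =>
    intro p
    rw [iterVal_succ, iterVal_succ]
    split
    · exact le_refl 0
    · have : gv (fun u w => iterVal G n (step1 G p u w))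
          ≤ gv (fun u w => iterVal G (n+1) (step1 G p u w)) :=
        gv_mono fun u w => ih _
      linarith

lemma iterVal_mono (p : V × V) : Monotone fun n => iterVal G n p :=
  monotone_nat_of_le_succ fun n => iterVal_succ_le_succ G n p

lemma iterVal_one (p : V × V) (hp : p.1 ≠ p.2) : iterVal G 1 p = 1 := by
  rw [iterVal_succ, if_neg hp]
  simp only [iterVal_zero]
  have h1 : gv (fun u w => (fun _ : V × V => (0:ℝ)) (step1 G p u w)) ≤ 0 :=
    gv_le_of_forall_le fun u w => le_refl 0
  have h2 : (0:ℝ) ≤ gv (fun u w => (fun _ : V × V => (0:ℝ)) (step1 G p u w)) :=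
    le_gv_of_forall_le fun u w => le_refl 0
  have : gv (fun u w => (fun _ : V × V => (0:ℝ)) (step1 G p u w)) = 0 := le_antisymm h1 h2
  rw [this]; ring

/-- The limit of the value iteration, in `ℝ≥0∞`. -/
noncomputable def uVal (p : V × V) : ℝ≥0∞ := ⨆ n, ENNReal.ofReal (iterVal G n p)

lemma uVal_diag (p : V × V) (hp : p.1 = p.2) : uVal G p = 0 := by
  simp [uVal, iterVal_diag G _ p hp]

lemma ofReal_iterVal_le_uVal (n : ℕ) (p : V × V) :
    ENNReal.ofReal (iterVal G n p) ≤ uVal G p := by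
  exact le_iSup (fun n => ENNReal.ofReal (iterVal G n p)) n

/-- Robber's one-step guarantee at level `N`. -/
lemma robber_step (N : ℕ) (p : V × V) (hp : p.1 ≠ p.2) (u : V) :
    iterVal G N p ≤ 1 + ∑ w, gvRho (fun u' w' => iterVal G N (step1 G p u' w')) w *
      iterVal G N (step1 G p u w) := by
  have h1 : iterVal G N p ≤ iterVal G (N + 1) p := iterVal_succ_le_succ G N p
  have h2 : iterVal G (N + 1) p
      = 1 + gv (fun u' w' => iterVal G N (step1 G p u' w')) := by
    rw [iterVal_succ, if_neg hp]
  have h3 := gv_le_rho (fun u' w' => iterVal G N (step1 G p u' w')) u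
  calc iterVal G N p ≤ iterVal G (N+1) p := h1
    _ = 1 + gv (fun u' w' => iterVal G N (step1 G p u' w')) := h2
    _ ≤ _ := by linarith

/-- Cop's one-step guarantee at the limit value. -/
lemma cop_step (p : V × V) (hp : p.1 ≠ p.2) (hfin : uVal G p ≠ ⊤) :
    ∃ α ∈ stdSimplex ℝ V,
      ∀ w, 1 + ∑ u, ENNReal.ofReal (α u) * uVal G (step1 G p u w) ≤ uVal G p := by
  classical
  set S : ℝ := (uVal G p).toReal with hS
  have hSn : ∀ n, iterVal G n p ≤ S := by
    intro n
    rw [hS, ← ENNReal.ofReal_le_iff_le_toReal hfin]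
    exact ofReal_iterVal_le_uVal G n p
  have hS1 : 1 ≤ S := le_trans (le_of_eq (iterVal_one G p hp).symm) (hSn 1)
  set αn : ℕ → (V → ℝ) := fun n => gvAlpha (fun u w => iterVal G n (step1 G p u w)) with hαn
  obtain ⟨α, hαS, ψ, hψmono, hψtend⟩ :=
    (isCompact_stdSimplex ℝ V).tendsto_subseq (fun n => gvAlpha_mem
      (fun u w => iterVal G n (step1 G p u w)))
  refine ⟨α, hαS, ?_⟩
  have key : ∀ m w, ∑ u, α u * iterVal G m (step1 G p u w) ≤ S - 1 := by
    intro m w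
    have hev : ∀ k, m ≤ k → ∑ u, αn (ψ k) u * iterVal G m (step1 G p u w) ≤ S - 1 := by
      intro k hk
      have hmk : m ≤ ψ k := le_trans hk (hψmono.le_apply)
      have hb1 : ∑ u, αn (ψ k) u * iterVal G m (step1 G p u w)
          ≤ ∑ u, αn (ψ k) u * iterVal G (ψ k) (step1 G p u w) := by
        refine Finset.sum_le_sum fun u _ => mul_le_mul_of_nonneg_left
          (iterVal_mono G _ hmk) ((gvAlpha_mem _).1 u)
      have hb2 : ∑ u, αn (ψ k) u * iterVal G (ψ k) (step1 G p u w)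
          ≤ gv (fun u' w' => iterVal G (ψ k) (step1 G p u' w')) :=
        alpha_le_gv _ w
      have hb3 : 1 + gv (fun u' w' => iterVal G (ψ k) (step1 G p u' w'))
          = iterVal G (ψ k + 1) p := by
        simp [iterVal, PhiOp, if_neg hp]
      have hb4 := hSn (ψ k + 1)
      rw [← hb3] at hb4
      linarith
    have hcont : Continuous fun σ : V → ℝ => ∑ u, σ u * iterVal G m (step1 G p u w) := by
      continuity
    have htend := (hcont.tendsto α).comp hψtend
    refine le_of_tendsto htend ?_
    filter_upwards [Filter.eventually_ge_atTop m] with k hk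
    exact hev k hk
  intro w
  have hofS : uVal G p = ENNReal.ofReal S := (ENNReal.ofReal_toReal hfin).symm
  have hsum : ∑ u, ENNReal.ofReal (α u) * uVal G (step1 G p u w)
      ≤ ENNReal.ofReal (S - 1) := by
    have heq : ∀ u : V, ENNReal.ofReal (α u) * uVal G (step1 G p u w)
        = ⨆ m, ENNReal.ofReal (α u) * ENNReal.ofReal (iterVal G m (step1 G p u w)) := by
      intro u
      rw [uVal, ENNReal.mul_iSup]
    rw [Finset.sum_congr rfl fun u _ => heq u]
    rw [ENNReal.finsetSum_iSup_of_monotone]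
    · refine iSup_le fun m => ?_
      have : ∑ u, ENNReal.ofReal (α u) * ENNReal.ofReal (iterVal G m (step1 G p u w))
          = ENNReal.ofReal (∑ u, α u * iterVal G m (step1 G p u w)) := by
        rw [ENNReal.ofReal_sum_of_nonneg]
        · exact Finset.sum_congr rfl fun u _ =>
            (ENNReal.ofReal_mul (hαS.1 u)).symm
        · exact fun u _ => mul_nonneg (hαS.1 u) (iterVal_nonneg G m _)
      rw [this]
      exact ENNReal.ofReal_le_ofReal (key m w)
    · intro u a b hab
      exact mul_le_mul_right (ENNReal.ofReal_le_ofReal (iterVal_mono G _ hab)) _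
  calc 1 + ∑ u, ENNReal.ofReal (α u) * uVal G (step1 G p u w)
      ≤ 1 + ENNReal.ofReal (S - 1) := add_le_add_right hsum 1
    _ = ENNReal.ofReal 1 + ENNReal.ofReal (S - 1) := by rw [ENNReal.ofReal_one]
    _ = ENNReal.ofReal S := by
        rw [← ENNReal.ofReal_add (by norm_num) (by linarith)]
        norm_num
    _ = uVal G p := hofS.symm

end Iter
section Expectation

open scoped ENNReal

/-- Expectation of a nonnegative function under a `PMF`. -/
noncomputable def pexp {α : Type*} (μ : PMF α) (g : α → ℝ≥0∞) : ℝ≥0∞ := ∑' a, μ a * g a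

lemma pexp_pure {α : Type*} (a : α) (g : α → ℝ≥0∞) : pexp (PMF.pure a) g = g a := by
  unfold pexp
  rw [tsum_eq_single a]
  · simp
  · intro b hb; simp [PMF.pure_apply, hb]

lemma pexp_bind {α β : Type*} (μ : PMF α) (f : α → PMF β) (g : β → ℝ≥0∞) :
    pexp (μ.bind f) g = pexp μ (fun a => pexp (f a) g) := by
  unfold pexp
  simp only [PMF.bind_apply]
  calc ∑' b, (∑' a, μ a * (f a) b) * g b
      = ∑' b, ∑' a, μ a * (f a) b * g b := by
        congr 1; funext b; rw [ENNReal.tsum_mul_right]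
    _ = ∑' a, ∑' b, μ a * (f a) b * g b := ENNReal.tsum_comm
    _ = ∑' a, μ a * ∑' b, (f a) b * g b := by
        congr 1; funext a
        rw [← ENNReal.tsum_mul_left]
        congr 1; funext b; rw [mul_assoc]

lemma pexp_le_pexp_of_support {α : Type*} (μ : PMF α) {f g : α → ℝ≥0∞}
    (h : ∀ a, μ a ≠ 0 → f a ≤ g a) : pexp μ f ≤ pexp μ g := by
  refine ENNReal.tsum_le_tsum fun a => ?_
  by_cases ha : μ a = 0
  · simp [ha]
  · exact mul_le_mul_right (h a ha) _

lemma pexp_mono {α : Type*} (μ : PMF α) {g h : α → ℝ≥0∞} (hgh : ∀ a, g a ≤ h a) :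
    pexp μ g ≤ pexp μ h :=
  ENNReal.tsum_le_tsum fun a => mul_le_mul_right (hgh a) _

lemma pexp_const {α : Type*} (μ : PMF α) (c : ℝ≥0∞) : pexp μ (fun _ => c) = c := by
  unfold pexp
  rw [ENNReal.tsum_mul_right, PMF.tsum_coe, one_mul]

lemma pexp_add {α : Type*} (μ : PMF α) (g h : α → ℝ≥0∞) :
    pexp μ (fun a => g a + h a) = pexp μ g + pexp μ h := by
  unfold pexp
  rw [← ENNReal.tsum_add]
  congr 1
  funext a
  rw [mul_add]

lemma pexp_const_add {α : Type*} (μ : PMF α) (c : ℝ≥0∞) (g : α → ℝ≥0∞) :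
    pexp μ (fun a => c + g a) = c + pexp μ g := by
  rw [pexp_add, pexp_const]

lemma pexp_const_mul {α : Type*} (μ : PMF α) (c : ℝ≥0∞) (g : α → ℝ≥0∞) :
    pexp μ (fun a => c * g a) = c * pexp μ g := by
  unfold pexp
  rw [← ENNReal.tsum_mul_left]
  congr 1
  funext a
  ring

lemma pexp_swap {α β : Type*} (μ : PMF α) (ν : PMF β) (f : α → β → ℝ≥0∞) :
    pexp μ (fun a => pexp ν (f a)) = pexp ν (fun b => pexp μ (fun a => f a b)) := by
  unfold pexp
  calc ∑' a, μ a * ∑' b, ν b * f a b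
      = ∑' a, ∑' b, μ a * (ν b * f a b) := by
        congr 1; funext a; rw [ENNReal.tsum_mul_left]
    _ = ∑' b, ∑' a, μ a * (ν b * f a b) := ENNReal.tsum_comm
    _ = ∑' b, ν b * ∑' a, μ a * f a b := by
        congr 1; funext b
        rw [← ENNReal.tsum_mul_left]
        congr 1; funext a; ring

lemma le_pexp_of_forall_le {α : Type*} (μ : PMF α) {g : α → ℝ≥0∞} {c : ℝ≥0∞}
    (h : ∀ a, c ≤ g a) : c ≤ pexp μ g := by
  calc c = pexp μ (fun _ => c) := (pexp_const μ c).symm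
    _ ≤ pexp μ g := pexp_mono μ h

lemma pexp_le_of_forall_le {α : Type*} (μ : PMF α) {g : α → ℝ≥0∞} {c : ℝ≥0∞}
    (h : ∀ a, g a ≤ c) : pexp μ g ≤ c := by
  calc pexp μ g ≤ pexp μ (fun _ => c) := pexp_mono μ h
    _ = c := pexp_const μ c

/-- Indicator that a position is not a capture position. -/
noncomputable def offInd {V : Type*} [DecidableEq V] (p : V × V) : ℝ≥0∞ := if p.1 = p.2 then 0 else 1

end Expectation
section PlayLemmas

open scoped ENNReal
open Filter

variable {V : Type*} [Fintype V] [DecidableEq V]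
variable (G : SimpleGraph V) [DecidableRel G.Adj]

/-- Expectation of a function of the current position at time `t`. -/
noncomputable def expAt (πC πR : Strat V) (init : V × V) (g : V × V → ℝ≥0∞) (t : ℕ) : ℝ≥0∞ :=
  pexp (play1 G πC πR init t) (fun h => g (h.getLast?.getD init))

lemma play1_zero (πC πR : Strat V) (init : V × V) :
    play1 G πC πR init 0 = PMF.pure [init] := rfl

lemma play1_succ (πC πR : Strat V) (init : V × V) (t : ℕ) :
    play1 G πC πR init (t + 1) = (play1 G πC πR init t).bind fun h =>
      (πC h).bind fun u => (πR h).bind fun w =>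
        PMF.pure (h ++ [step1 G (h.getLast?.getD init) u w]) := rfl

set_option linter.unusedSectionVars false

lemma lastPos_concat (init x : V × V) (h : List (V × V)) :
    ((h ++ [x]).getLast?.getD init) = x := by
  rw [List.getLast?_append_cons]
  rfl

lemma expAt_zero (πC πR : Strat V) (init : V × V) (g : V × V → ℝ≥0∞) :
    expAt G πC πR init g 0 = g init := by
  unfold expAt
  show pexp (PMF.pure [init]) _ = _
  rw [pexp_pure]
  rfl

lemma expAt_succ (πC πR : Strat V) (init : V × V) (g : V × V → ℝ≥0∞) (t : ℕ) :
    expAt G πC πR init g (t + 1)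
      = pexp (play1 G πC πR init t) (fun h => pexp (πC h) (fun u => pexp (πR h)
          (fun w => g (step1 G (h.getLast?.getD init) u w)))) := by
  unfold expAt
  show pexp ((play1 G πC πR init t).bind _) _ = _
  rw [pexp_bind]
  congr 1; funext h
  rw [pexp_bind]
  congr 1; funext u
  rw [pexp_bind]
  congr 1; funext w
  rw [pexp_pure, lastPos_concat]

lemma freeProb1_eq_expAt (πC πR : Strat V) (init : V × V) (t : ℕ) :
    freeProb1 G πC πR init t = expAt G πC πR init offInd t := by
  unfold freeProb1 expAt pexp
  rw [PMF.toOuterMeasure_apply]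
  congr 1; funext h
  by_cases hh : (h.getLast?.getD init).1 = (h.getLast?.getD init).2
  · simp [Set.indicator, hh, offInd]
  · simp [Set.indicator, hh, offInd]

lemma play1_ne_nil (πC πR : Strat V) (init : V × V) (t : ℕ) :
    ∀ h ∈ (play1 G πC πR init t).support, h ≠ [] := by
  induction t with
  | zero =>
    intro h hh
    rw [play1_zero, PMF.support_pure] at hh
    rw [Set.mem_singleton_iff] at hh
    subst hh; simp
  | succ t ih =>
    intro h hh
    rw [play1_succ, PMF.support_bind] at hh
    simp only [Set.mem_iUnion] at hh
    obtain ⟨h', -, hh⟩ := hh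
    rw [PMF.support_bind] at hh
    simp only [Set.mem_iUnion] at hh
    obtain ⟨u, -, hh⟩ := hh
    rw [PMF.support_bind] at hh
    simp only [Set.mem_iUnion] at hh
    obtain ⟨w, -, hh⟩ := hh
    rw [PMF.support_pure, Set.mem_singleton_iff] at hh
    subst hh; simp

/-- The robber's master supermartingale bound: a finite nonnegative function which is
subharmonic for the robber strategy `ρ` is a lower bound on the payoff. -/
lemma robber_payoff_ge (v : V × V → ℝ≥0∞) (Cb : ℝ≥0∞) (hCb : Cb ≠ ⊤)
    (ρ : V × V → PMF V)
    (hboundOff : ∀ p, v p ≤ Cb * offInd p)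
    (hstep : ∀ p u, v p ≤ offInd p + pexp (ρ p) (fun w => v (step1 G p u w)))
    (πR : Strat V)
    (hπR : ∀ h : List (V × V), h ≠ [] → ∀ init₀ : V × V, πR h = ρ (h.getLast?.getD init₀))
    (πC : Strat V) (init : V × V) :
    v init ≤ payoff G πC πR init := by
  have key : ∀ t, expAt G πC πR init v t
      ≤ freeProb1 G πC πR init t + expAt G πC πR init v (t + 1) := by
    intro t
    rw [freeProb1_eq_expAt, expAt_succ]
    unfold expAt
    rw [← pexp_add]
    refine pexp_le_pexp_of_support _ fun h hsup => ?_
    have hne : h ≠ [] := play1_ne_nil G πC πR init t h ((PMF.mem_support_iff _ _).2 hsup)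
    · rw [hπR h hne init]
      set p := h.getLast?.getD init with hp
      calc v p = pexp (πC h) (fun _ => v p) := (pexp_const _ _).symm
        _ ≤ pexp (πC h) (fun u => offInd p + pexp (ρ p) (fun w => v (step1 G p u w))) :=
            pexp_mono _ fun u => hstep p u
        _ = offInd p + pexp (πC h) (fun u => pexp (ρ p) (fun w => v (step1 G p u w))) :=
            pexp_const_add _ _ _

  have chain : ∀ t, v init
      ≤ (∑ s ∈ Finset.range t, freeProb1 G πC πR init s) + expAt G πC πR init v t := by
    intro t
    induction t with
    | zero => simpa [expAt_zero] using le_refl (v init)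
    | succ t ih =>
      calc v init ≤ (∑ s ∈ Finset.range t, freeProb1 G πC πR init s)
            + expAt G πC πR init v t := ih
        _ ≤ (∑ s ∈ Finset.range t, freeProb1 G πC πR init s)
            + (freeProb1 G πC πR init t + expAt G πC πR init v (t+1)) :=
            add_le_add_right (key t) _
        _ = _ := by rw [Finset.sum_range_succ, add_assoc]
  by_cases hpay : payoff G πC πR init = ⊤
  · rw [hpay]; exact le_top
  · have hsum : ∀ t, ∑ s ∈ Finset.range t, freeProb1 G πC πR init s ≤ payoff G πC πR init :=
      fun t => ENNReal.sum_le_tsum (Finset.range t)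
    have htend : Tendsto (fun t => freeProb1 G πC πR init t) atTop (nhds 0) :=
      ENNReal.tendsto_atTop_zero_of_tsum_ne_top hpay
    have hEv : ∀ t, expAt G πC πR init v t ≤ Cb * freeProb1 G πC πR init t := by
      intro t
      rw [freeProb1_eq_expAt]
      unfold expAt
      calc pexp (play1 G πC πR init t) (fun h => v (h.getLast?.getD init))
          ≤ pexp (play1 G πC πR init t) (fun h => Cb * offInd (h.getLast?.getD init)) :=
            pexp_mono _ fun h => hboundOff _
        _ = Cb * pexp (play1 G πC πR init t) (fun h => offInd (h.getLast?.getD init)) :=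
            pexp_const_mul _ _ _
    have hv : ∀ t, v init ≤ payoff G πC πR init + Cb * freeProb1 G πC πR init t :=
      fun t => (chain t).trans (add_le_add (hsum t) (hEv t))
    have htend2 : Tendsto (fun t => payoff G πC πR init + Cb * freeProb1 G πC πR init t)
        atTop (nhds (payoff G πC πR init + Cb * 0)) :=
      Filter.Tendsto.const_add _ (ENNReal.Tendsto.const_mul htend (Or.inr hCb))
    rw [mul_zero, add_zero] at htend2
    exact ge_of_tendsto htend2 (Filter.Eventually.of_forall hv)

/-- The cop's master supermartingale bound: a superharmonic function for the cop
strategy `α` is an upper bound on the payoff against every robber. -/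
lemma cop_payoff_le (U : V × V → ℝ≥0∞) (α : V × V → PMF V)
    (hstep : ∀ p w, offInd p + pexp (α p) (fun u => U (step1 G p u w)) ≤ U p)
    (πC : Strat V)
    (hπC : ∀ h : List (V × V), h ≠ [] → ∀ init₀ : V × V, πC h = α (h.getLast?.getD init₀))
    (πR : Strat V) (init : V × V) :
    payoff G πC πR init ≤ U init := by
  have key : ∀ t, freeProb1 G πC πR init t + expAt G πC πR init U (t + 1)
      ≤ expAt G πC πR init U t := by
    intro t
    rw [freeProb1_eq_expAt, expAt_succ]
    unfold expAt
    rw [← pexp_add]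
    refine pexp_le_pexp_of_support _ fun h hsup => ?_
    have hne : h ≠ [] := play1_ne_nil G πC πR init t h ((PMF.mem_support_iff _ _).2 hsup)
    · rw [hπC h hne init]
      set p := h.getLast?.getD init with hp
      calc offInd p + pexp (α p) (fun u => pexp (πR h) (fun w => U (step1 G p u w)))
          = offInd p + pexp (πR h) (fun w => pexp (α p) (fun u => U (step1 G p u w))) := by
            rw [pexp_swap]
        _ = pexp (πR h) (fun w => offInd p + pexp (α p) (fun u => U (step1 G p u w))) :=
            (pexp_const_add _ _ _).symm
        _ ≤ pexp (πR h) (fun _ => U p) := pexp_mono _ fun w => hstep p w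
        _ = U p := pexp_const _ _
  have chain : ∀ t, (∑ s ∈ Finset.range t, freeProb1 G πC πR init s)
      + expAt G πC πR init U t ≤ U init := by
    intro t
    induction t with
    | zero => simpa [expAt_zero] using le_refl (U init)
    | succ t ih =>
      calc (∑ s ∈ Finset.range (t+1), freeProb1 G πC πR init s)
            + expAt G πC πR init U (t+1)
          = (∑ s ∈ Finset.range t, freeProb1 G πC πR init s)
            + (freeProb1 G πC πR init t + expAt G πC πR init U (t+1)) := by
            rw [Finset.sum_range_succ, add_assoc]
        _ ≤ (∑ s ∈ Finset.range t, freeProb1 G πC πR init s) + expAt G πC πR init U t :=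
            add_le_add_right (key t) _
        _ ≤ U init := ih
  have hsum : ∀ t, ∑ s ∈ Finset.range t, freeProb1 G πC πR init s ≤ U init :=
    fun t => le_trans le_self_add (chain t)
  rw [payoff, ENNReal.tsum_eq_iSup_nat]
  exact iSup_le hsum

end PlayLemmas
section Assembly

open scoped ENNReal
open Finset

variable {V : Type*} [Fintype V] [DecidableEq V]

/-- The `PMF` on a finite type induced by a point of the standard simplex. -/
noncomputable def simplexPMF {σ : V → ℝ} (hσ : σ ∈ stdSimplex ℝ V) : PMF V :=
  PMF.ofFintype (fun v => ENNReal.ofReal (σ v)) (by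
    rw [← ENNReal.ofReal_sum_of_nonneg (fun i _ => hσ.1 i), hσ.2, ENNReal.ofReal_one])

lemma pexp_simplexPMF {σ : V → ℝ} (hσ : σ ∈ stdSimplex ℝ V) (g : V → ℝ≥0∞) :
    pexp (simplexPMF hσ) g = ∑ v, ENNReal.ofReal (σ v) * g v := by
  unfold pexp
  rw [tsum_fintype]
  rfl

/-- A memoryless strategy determined by the last position. -/
def stratOfLast [Nonempty V] (f : V × V → PMF V) : Strat V :=
  fun h => (h.getLast?).rec (PMF.pure (Classical.arbitrary V)) f

lemma stratOfLast_memoryless [Nonempty V] (f : V × V → PMF V) :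
    Memoryless (stratOfLast f) := by
  intro h₁ h₂ he
  unfold stratOfLast
  rw [he]

lemma stratOfLast_spec [Nonempty V] (f : V × V → PMF V) :
    ∀ h : List (V × V), h ≠ [] → ∀ init₀ : V × V,
      stratOfLast f h = f (h.getLast?.getD init₀) := by
  intro h hne init₀
  obtain ⟨p, hp⟩ : ∃ p, h.getLast? = some p := by
    cases hl : h.getLast? with
    | none => exact absurd (List.getLast?_eq_none_iff.mp hl) hne
    | some p => exact ⟨p, rfl⟩
  unfold stratOfLast
  rw [hp]
  rfl

variable (G : SimpleGraph V) [DecidableRel G.Adj]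

lemma step1_diag (p : V × V) (hp : p.1 = p.2) (u w : V) : step1 G p u w = p := by
  simp [step1, hp]

/-- The cop strategy certifying `gameValue ≤ uVal`. -/
lemma gameValue_le_uVal [Nonempty V] (init : V × V) : gameValue G init ≤ uVal G init := by
  classical
  have hcop : ∀ p : V × V, ∃ a : PMF V,
      ∀ w, offInd p + pexp a (fun u => uVal G (step1 G p u w)) ≤ uVal G p := by
    intro p
    by_cases hd : p.1 = p.2
    · refine ⟨PMF.pure p.1, fun w => ?_⟩
      rw [offInd, if_pos hd, zero_add]
      refine pexp_le_of_forall_le _ fun u => ?_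
      rw [step1_diag G p hd u w]
    · by_cases ht : uVal G p = ⊤
      · exact ⟨PMF.pure p.1, fun w => ht ▸ le_top⟩
      · obtain ⟨a, haS, ha⟩ := cop_step G p hd ht
        refine ⟨simplexPMF haS, fun w => ?_⟩
        rw [pexp_simplexPMF, offInd, if_neg hd]
        exact ha w
  choose αP hαP using hcop
  have h1 : gameValue G init ≤ ⨆ πR : Strat V, payoff G (stratOfLast αP) πR init :=
    iInf_le _ _
  refine h1.trans (iSup_le fun πR => ?_)
  exact cop_payoff_le G (uVal G) αP (fun p w => hαP p w) (stratOfLast αP)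
    (stratOfLast_spec αP) πR init

end Assembly

/-- for every `ε > 0` there exists a memoryless randomized robber
strategy which is `ε`-optimal simultaneously for every initial position with finite
value. -/
theorem exists_memoryless_eps_optimal_robber_strategy (G : SimpleGraph V)
    [DecidableRel G.Adj] (hconn : G.Connected) :
    ∀ ε : ENNReal, 0 < ε →
      ∃ πR : Strat V, Memoryless πR ∧
        ∀ init : V × V, gameValue G init < ⊤ →
          gameValue G init - ε ≤ ⨅ πC : Strat V, payoff G πC πR init := by
  classical
  intro ε hε
  haveI : Nonempty V := hconn.nonempty
  have hchoice : ∀ p : V × V, ∃ N : ℕ, gameValue G p < ⊤ →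
      gameValue G p - ε ≤ ENNReal.ofReal (iterVal G N p) := by
    intro p
    by_cases hfin : gameValue G p < ⊤
    · by_cases hz : gameValue G p ≤ ε
      · exact ⟨0, fun _ => by rw [tsub_eq_zero_iff_le.mpr hz]; exact zero_le⟩
      · push_neg at hz
        have hne0 : gameValue G p ≠ 0 := by
          intro h0; rw [h0] at hz; exact (not_lt_of_ge zero_le) hz
        have h1 : gameValue G p - ε < gameValue G p :=
          ENNReal.sub_lt_self hfin.ne hne0 hε.ne'
        have h2 : gameValue G p - ε < uVal G p := lt_of_lt_of_le h1 (gameValue_le_uVal G p)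
        rw [uVal, lt_iSup_iff] at h2
        obtain ⟨N, hN⟩ := h2
        exact ⟨N, fun _ => hN.le⟩
    · exact ⟨0, fun h => absurd h hfin⟩
  choose Nf hNf using hchoice
  set N : ℕ := Finset.univ.sup Nf with hN
  set ρP : V × V → PMF V :=
    fun p => simplexPMF (gvRho_mem (fun u w => iterVal G N (step1 G p u w))) with hρP
  refine ⟨stratOfLast ρP, stratOfLast_memoryless ρP, ?_⟩
  intro init hinit
  have hguar : ∀ πC : Strat V,
      ENNReal.ofReal (iterVal G N init) ≤ payoff G πC (stratOfLast ρP) init := by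
    intro πC
    refine robber_payoff_ge G (fun p => ENNReal.ofReal (iterVal G N p)) (N : ENNReal)
      (ENNReal.natCast_ne_top N) ρP ?_ ?_ (stratOfLast ρP) (stratOfLast_spec ρP) πC init
    · intro p
      by_cases hd : p.1 = p.2
      · rw [iterVal_diag G N p hd]; simp
      · rw [offInd, if_neg hd, mul_one]
        calc ENNReal.ofReal (iterVal G N p) ≤ ENNReal.ofReal (N : ℝ) :=
              ENNReal.ofReal_le_ofReal (iterVal_le G N p)
          _ = (N : ENNReal) := ENNReal.ofReal_natCast N
    · intro p u
      by_cases hd : p.1 = p.2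
      · rw [iterVal_diag G N p hd]; simp
      · rw [hρP]
        rw [pexp_simplexPMF]
        have hkey := robber_step G N p hd u
        rw [offInd, if_neg hd]
        have hnn : ∀ w ∈ Finset.univ (α := V),
            0 ≤ gvRho (fun u' w' => iterVal G N (step1 G p u' w')) w *
              iterVal G N (step1 G p u w) := fun w _ =>
          mul_nonneg ((gvRho_mem _).1 w) (iterVal_nonneg G N _)
        calc ENNReal.ofReal (iterVal G N p)
            ≤ ENNReal.ofReal (1 + ∑ w, gvRho (fun u' w' => iterVal G N (step1 G p u' w')) w *
                iterVal G N (step1 G p u w)) := ENNReal.ofReal_le_ofReal hkey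
          _ = 1 + ENNReal.ofReal (∑ w, gvRho (fun u' w' => iterVal G N (step1 G p u' w')) w *
                iterVal G N (step1 G p u w)) := by
              rw [ENNReal.ofReal_add zero_le_one (Finset.sum_nonneg hnn), ENNReal.ofReal_one]
          _ = 1 + ∑ w, ENNReal.ofReal (gvRho (fun u' w' => iterVal G N (step1 G p u' w')) w) *
                ENNReal.ofReal (iterVal G N (step1 G p u w)) := by
              rw [ENNReal.ofReal_sum_of_nonneg hnn]
              congr 1
              exact Finset.sum_congr rfl fun w _ => ENNReal.ofReal_mul ((gvRho_mem _).1 w)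
  have hlast : ENNReal.ofReal (iterVal G (Nf init) init)
      ≤ ENNReal.ofReal (iterVal G N init) :=
    ENNReal.ofReal_le_ofReal (iterVal_mono G init (Finset.le_sup (Finset.mem_univ init)))
  exact le_trans (le_trans (hNf init hinit) hlast) (le_iInf hguar)
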